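/- Fix an integer N ≥ 2 and a real number q with 0 < q < 1. Let m ≥ 3 be an odd integer and let λ be an integer coprime to m with λ ≢ m−1 (mod m). Let β be an integer with βλ ≡ 1 (mod m), and assume gcd(β+1, m) = 1. Then for every x ∈ ℂ \ {0} at which all theta factors occurring are nonzero, ∏_{k=1}^{m} U(q^{−N(λ+1)k/m} x) / U(q^{−Nλk/m} x) = 1. (This is the vanishing of the exchange function of the generator t_{m,−m}(z) with L(w) on the surface S_{m,−m} with c = −N/m and −p^{1/2} = q^{Nλ/m}, yielding the localized extension of the center of A_{q,p}(gl(N)_c).) -/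

import Mathlib

set_option maxHeartbeats 1000000

open Complex Filter

/-- Infinite `q`-Pochhammer symbol `(z;p)_∞ = ∏_{j≥0} (1 − z pʲ)`. -/
noncomputable def qPoch (z p : ℂ) : ℂ := ∏' j : ℕ, (1 - z * p ^ j)

/-- Jacobi Θ function `Θ_p(z) = (z;p)_∞ (p z⁻¹;p)_∞ (p;p)_∞`. -/
noncomputable def ThetaF (p z : ℂ) : ℂ := qPoch z p * qPoch (p * z⁻¹) p * qPoch p p

/-- The function
`U(z) = q^{2/N−2} · Θ_{q^{2N}}(q²z²) Θ_{q^{2N}}(q²z⁻²) / (Θ_{q^{2N}}(z²) Θ_{q^{2N}}(z⁻²))`. -/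
noncomputable def Ufun (N : ℕ) (q : ℝ) (z : ℂ) : ℂ :=
  ((q ^ ((2 : ℝ) / N - 2) : ℝ) : ℂ) *
    (ThetaF ((q : ℂ) ^ (2 * N)) ((q : ℂ) ^ 2 * z ^ 2) *
      ThetaF ((q : ℂ) ^ (2 * N)) ((q : ℂ) ^ 2 * z⁻¹ ^ 2)) /
    (ThetaF ((q : ℂ) ^ (2 * N)) (z ^ 2) * ThetaF ((q : ℂ) ^ (2 * N)) (z⁻¹ ^ 2))

/-- All four theta factors occurring in `U(z)` are nonzero. -/
def thetaReg (N : ℕ) (q : ℝ) (z : ℂ) : Prop :=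
  ThetaF ((q : ℂ) ^ (2 * N)) ((q : ℂ) ^ 2 * z ^ 2) ≠ 0 ∧
  ThetaF ((q : ℂ) ^ (2 * N)) ((q : ℂ) ^ 2 * z⁻¹ ^ 2) ≠ 0 ∧
  ThetaF ((q : ℂ) ^ (2 * N)) (z ^ 2) ≠ 0 ∧
  ThetaF ((q : ℂ) ^ (2 * N)) (z⁻¹ ^ 2) ≠ 0

lemma multipliable_aux {z p : ℂ} (hp : ‖p‖ < 1) :
    Multipliable (fun j : ℕ => 1 - z * p ^ j) := by
  by_cases hz : ∃ j0 : ℕ, z * p ^ j0 = 1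
  · obtain ⟨j0, hj0⟩ := hz
    refine ⟨0, ?_⟩
    have hev : (fun s : Finset ℕ => ∏ i ∈ s, (1 - z * p ^ i)) =ᶠ[atTop]
        (fun _ => (0 : ℂ)) := by
      filter_upwards [eventually_ge_atTop ({j0} : Finset ℕ)] with s hs
      exact Finset.prod_eq_zero (hs (Finset.mem_singleton_self j0)) (by rw [hj0]; ring)
    exact (tendsto_const_nhds.congr' hev.symm)
  · push_neg at hz
    have hne : ∀ j : ℕ, (1 : ℂ) - z * p ^ j ≠ 0 := by
      intro j h
      exact hz j (by linear_combination -h)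
    have hsum : Summable (fun n : ℕ => Complex.log (1 - z * p ^ n)) := by
      have hgeo : Summable (fun n : ℕ => (3 / 2 : ℝ) * (‖z‖ * ‖p‖ ^ n)) :=
        (((summable_geometric_of_lt_one (norm_nonneg p) hp).mul_left ‖z‖).mul_left _)
      refine Summable.of_norm_bounded_eventually hgeo ?_
      rw [Nat.cofinite_eq_atTop]
      have h0 : Tendsto (fun n : ℕ => ‖z‖ * ‖p‖ ^ n) atTop (nhds 0) := by
        simpa using (tendsto_pow_atTop_nhds_zero_of_lt_one (norm_nonneg p) hp).const_mul ‖z‖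
      filter_upwards [h0.eventually_le_const (by norm_num : (0:ℝ) < 1/2)] with n hn
      have hb : ‖-(z * p ^ n)‖ ≤ 1 / 2 := by
        rw [norm_neg, norm_mul, norm_pow]; exact hn
      calc ‖Complex.log (1 - z * p ^ n)‖
          = ‖Complex.log (1 + -(z * p ^ n))‖ := by rw [sub_eq_add_neg]
        _ ≤ 3 / 2 * ‖-(z * p ^ n)‖ := Complex.norm_log_one_add_half_le_self hb
        _ = 3 / 2 * (‖z‖ * ‖p‖ ^ n) := by rw [norm_neg, norm_mul, norm_pow]
    exact Complex.multipliable_of_summable_log hsum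

lemma qPoch_shift (z p : ℂ) (hp : ‖p‖ < 1) :
    qPoch z p = (1 - z) * qPoch (p * z) p := by
  have hm2 : Multipliable (fun n : ℕ => 1 - z * p ^ (n + 1)) :=
    (multipliable_aux (z := z * p) (p := p) hp).congr (fun n => by ring)
  have h := tprod_eq_zero_mul' (f := fun j : ℕ => 1 - z * p ^ j) hm2
  rw [qPoch, h]
  simp only [pow_zero, mul_one]
  congr 1
  rw [qPoch]
  exact tprod_congr fun j => by ring

lemma theta_shift {p : ℂ} (hp0 : p ≠ 0) (hp : ‖p‖ < 1) {z : ℂ} (hz : z ≠ 0) :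
    ThetaF p (p * z) = -z⁻¹ * ThetaF p z := by
  have h1 : p * (p * z)⁻¹ = z⁻¹ := by field_simp
  rw [ThetaF, ThetaF, h1, qPoch_shift z p hp, qPoch_shift z⁻¹ p hp]
  have h2 : (1 : ℂ) - z⁻¹ = -z⁻¹ * (1 - z) := by field_simp; ring
  linear_combination qPoch (p * z) p * qPoch (p * z⁻¹) p * qPoch p p * h2

lemma theta_shift_inv {p : ℂ} (hp0 : p ≠ 0) (hp : ‖p‖ < 1) {z : ℂ} (hz : z ≠ 0) :
    ThetaF p (p⁻¹ * z) = -(p⁻¹ * z) * ThetaF p z := by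
  set w := p⁻¹ * z with hwdef
  have hw : w ≠ 0 := mul_ne_zero (inv_ne_zero hp0) hz
  have h := theta_shift hp0 hp hw
  rw [show p * w = z by rw [hwdef]; field_simp] at h
  have hww : w * w⁻¹ = 1 := mul_inv_cancel₀ hw
  linear_combination w * h - ThetaF p w * hww

lemma Ufun_step (N : ℕ) (hN : 1 ≤ N) {q : ℝ} (hq0 : 0 < q) (hq1 : q < 1) {z : ℂ}
    (hz : z ≠ 0) : Ufun N q ((q : ℂ) ^ N * z) = Ufun N q z := by
  have hqc : (q : ℂ) ≠ 0 := Complex.ofReal_ne_zero.2 hq0.ne'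
  have hp0 : ((q : ℂ) ^ (2 * N)) ≠ 0 := pow_ne_zero _ hqc
  have hpn : ‖(q : ℂ) ^ (2 * N)‖ < 1 := by
    rw [norm_pow, Complex.norm_real, Real.norm_eq_abs, abs_of_pos hq0]
    exact pow_lt_one₀ hq0.le hq1 (by omega)
  have hqN : (q : ℂ) ^ N ≠ 0 := pow_ne_zero _ hqc
  have hz1 : (q : ℂ) ^ 2 * z ^ 2 ≠ 0 := mul_ne_zero (pow_ne_zero _ hqc) (pow_ne_zero _ hz)
  have hz2 : (q : ℂ) ^ 2 * z⁻¹ ^ 2 ≠ 0 :=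
    mul_ne_zero (pow_ne_zero _ hqc) (pow_ne_zero _ (inv_ne_zero hz))
  have hz3 : z ^ 2 ≠ 0 := pow_ne_zero _ hz
  have hz4 : z⁻¹ ^ 2 ≠ 0 := pow_ne_zero _ (inv_ne_zero hz)
  rw [Ufun, Ufun]
  rw [show (q : ℂ) ^ 2 * ((q : ℂ) ^ N * z) ^ 2 = (q : ℂ) ^ (2 * N) * ((q : ℂ) ^ 2 * z ^ 2) by
        ring,
      show (q : ℂ) ^ 2 * ((q : ℂ) ^ N * z)⁻¹ ^ 2
          = ((q : ℂ) ^ (2 * N))⁻¹ * ((q : ℂ) ^ 2 * z⁻¹ ^ 2) by field_simp; ring,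
      show ((q : ℂ) ^ N * z) ^ 2 = (q : ℂ) ^ (2 * N) * z ^ 2 by ring,
      show ((q : ℂ) ^ N * z)⁻¹ ^ 2 = ((q : ℂ) ^ (2 * N))⁻¹ * z⁻¹ ^ 2 by field_simp; ring,
      theta_shift hp0 hpn hz1, theta_shift_inv hp0 hpn hz2,
      theta_shift hp0 hpn hz3, theta_shift_inv hp0 hpn hz4]
  set p : ℂ := (q : ℂ) ^ (2 * N) with hpdef
  set T1 := ThetaF p ((q : ℂ) ^ 2 * z ^ 2)
  set T2 := ThetaF p ((q : ℂ) ^ 2 * z⁻¹ ^ 2)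
  set T3 := ThetaF p (z ^ 2)
  set T4 := ThetaF p (z⁻¹ ^ 2)
  have hc : p⁻¹ * z⁻¹ ^ 2 * (z ^ 2)⁻¹ ≠ 0 :=
    mul_ne_zero (mul_ne_zero (inv_ne_zero hp0) hz4) (inv_ne_zero hz3)
  have e1 : -((q : ℂ) ^ 2 * z ^ 2)⁻¹ * T1 * (-(p⁻¹ * ((q : ℂ) ^ 2 * z⁻¹ ^ 2)) * T2)
      = (p⁻¹ * z⁻¹ ^ 2 * (z ^ 2)⁻¹) * (T1 * T2) := by
    field_simp
  have e2 : -(z ^ 2)⁻¹ * T3 * (-(p⁻¹ * z⁻¹ ^ 2) * T4)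
      = (p⁻¹ * z⁻¹ ^ 2 * (z ^ 2)⁻¹) * (T3 * T4) := by ring
  rw [e1, e2, mul_div_assoc, mul_div_mul_left _ _ hc, ← mul_div_assoc]

lemma Ufun_step_inv (N : ℕ) (hN : 1 ≤ N) {q : ℝ} (hq0 : 0 < q) (hq1 : q < 1) {z : ℂ}
    (hz : z ≠ 0) : Ufun N q (((q : ℂ) ^ N)⁻¹ * z) = Ufun N q z := by
  have hqc : (q : ℂ) ≠ 0 := Complex.ofReal_ne_zero.2 hq0.ne'
  have hqN : (q : ℂ) ^ N ≠ 0 := pow_ne_zero _ hqc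
  have h := Ufun_step N hN hq0 hq1 (z := ((q : ℂ) ^ N)⁻¹ * z)
    (mul_ne_zero (inv_ne_zero hqN) hz)
  rw [show (q : ℂ) ^ N * (((q : ℂ) ^ N)⁻¹ * z) = z by field_simp] at h
  exact h.symm

lemma Ufun_zpow (N : ℕ) (hN : 1 ≤ N) {q : ℝ} (hq0 : 0 < q) (hq1 : q < 1) (t : ℤ)
    {z : ℂ} (hz : z ≠ 0) : Ufun N q (((q : ℂ) ^ N) ^ t * z) = Ufun N q z := by
  have hqc : (q : ℂ) ≠ 0 := Complex.ofReal_ne_zero.2 hq0.ne'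
  have hqN : (q : ℂ) ^ N ≠ 0 := pow_ne_zero _ hqc
  induction t using Int.induction_on with
  | zero => rw [zpow_zero, one_mul]
  | succ n ih =>
      have hz' : ((q : ℂ) ^ N) ^ (n : ℤ) * z ≠ 0 := mul_ne_zero (zpow_ne_zero _ hqN) hz
      rw [show ((q : ℂ) ^ N) ^ ((n : ℤ) + 1) * z = (q : ℂ) ^ N * (((q : ℂ) ^ N) ^ (n : ℤ) * z) by
            rw [zpow_add_one₀ hqN]; ring,
        Ufun_step N hN hq0 hq1 hz', ih]
  | pred n ih =>
      have hz' : ((q : ℂ) ^ N) ^ (-(n : ℤ)) * z ≠ 0 := mul_ne_zero (zpow_ne_zero _ hqN) hz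
      rw [show ((q : ℂ) ^ N) ^ (-(n : ℤ) - 1) * z
            = ((q : ℂ) ^ N)⁻¹ * (((q : ℂ) ^ N) ^ (-(n : ℤ)) * z) by
            rw [zpow_sub_one₀ hqN]; ring,
        Ufun_step_inv N hN hq0 hq1 hz', ih]

lemma prod_residues {m a : ℤ} (hm : 0 < m) (hcop : IsCoprime a m) (F : ℤ → ℂ) :
    ∏ k ∈ Finset.Icc 1 m, F (a * k % m) = ∏ r ∈ Finset.Ico 0 m, F r := by
  have hmaps : ∀ k ∈ Finset.Icc (1 : ℤ) m, a * k % m ∈ Finset.Ico (0 : ℤ) m := by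
    intro k _
    exact Finset.mem_Ico.2 ⟨Int.emod_nonneg _ hm.ne', Int.emod_lt_of_pos _ hm⟩
  have hinj : Set.InjOn (fun k => a * k % m) (Finset.Icc (1 : ℤ) m) := by
    intro k1 hk1 k2 hk2 h
    simp only [Finset.coe_Icc, Set.mem_Icc] at hk1 hk2
    have hmod : m ∣ a * k2 - a * k1 := Int.ModEq.dvd h
    have hmod' : m ∣ a * (k2 - k1) := by
      have : a * (k2 - k1) = a * k2 - a * k1 := by ring
      rw [this]; exact hmod
    have hdvd : m ∣ k2 - k1 := (hcop.symm).dvd_of_dvd_mul_left hmod'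
    have : k2 - k1 = 0 := Int.eq_zero_of_abs_lt_dvd hdvd (by
      rw [abs_sub_lt_iff]; omega)
    omega
  have hcard : (Finset.Ico (0 : ℤ) m).card ≤ (Finset.Icc (1 : ℤ) m).card := by
    rw [Int.card_Ico, Int.card_Icc]
    omega
  have hsurj : Set.SurjOn (fun k => a * k % m) (Finset.Icc (1 : ℤ) m)
      (Finset.Ico (0 : ℤ) m) := by
    have himg : (Finset.Icc (1 : ℤ) m).image (fun k => a * k % m) = Finset.Ico 0 m := by
      apply Finset.eq_of_subset_of_card_le
      · intro r hr
        obtain ⟨k, hk, rfl⟩ := Finset.mem_image.1 hr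
        exact hmaps k hk
      · calc (Finset.Ico (0 : ℤ) m).card ≤ (Finset.Icc (1 : ℤ) m).card := hcard
          _ = ((Finset.Icc (1 : ℤ) m).image (fun k => a * k % m)).card :=
            (Finset.card_image_of_injOn hinj).symm
    intro r hr
    have hr' : r ∈ Finset.Ico (0 : ℤ) m := by simpa using hr
    rw [← himg] at hr'
    obtain ⟨k, hk, hkr⟩ := Finset.mem_image.1 hr'
    exact ⟨k, by simpa using hk, hkr⟩
  exact Finset.prod_nbij (fun k => a * k % m) hmaps hinj hsurj (fun k _ => rfl)

lemma Ufun_exp_mod (N : ℕ) (hN : 1 ≤ N) {q : ℝ} (hq0 : 0 < q) (hq1 : q < 1)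
    {m : ℤ} (hm : 0 < m) {x : ℂ} (hx : x ≠ 0) (j : ℤ) :
    Ufun N q (((q ^ (-(N : ℝ) * (j : ℝ) / (m : ℝ)) : ℝ) : ℂ) * x)
      = Ufun N q (((q ^ (-(N : ℝ) * ((j % m : ℤ) : ℝ) / (m : ℝ)) : ℝ) : ℂ) * x) := by
  have hm0 : (m : ℝ) ≠ 0 := by exact_mod_cast hm.ne'
  set t : ℤ := j / m with ht
  set r : ℤ := j % m with hr
  have hjr : (j : ℝ) = (m : ℝ) * (t : ℝ) + (r : ℝ) := by
    have h := Int.mul_ediv_add_emod j m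
    exact_mod_cast h.symm
  have hexp : -(N : ℝ) * (j : ℝ) / (m : ℝ)
      = (((N : ℤ) * (-t) : ℤ) : ℝ) + -(N : ℝ) * (r : ℝ) / (m : ℝ) := by
    rw [hjr]; push_cast; field_simp; ring
  rw [hexp, Real.rpow_add hq0, Real.rpow_intCast]
  have h2 : q ^ ((N : ℤ) * (-t)) = (q ^ N : ℝ) ^ (-t) := by
    rw [zpow_mul, zpow_natCast]
  rw [h2, Complex.ofReal_mul, Complex.ofReal_zpow, Complex.ofReal_pow, mul_assoc]
  exact Ufun_zpow N hN hq0 hq1 (-t)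
    (mul_ne_zero (Complex.ofReal_ne_zero.2 (Real.rpow_pos_of_pos hq0 _).ne') hx)

/-- Localized extension of the center: for `m ≥ 3` odd, `λ` coprime to `m` with
`λ ≢ m−1 (mod m)`, and `β` with `βλ ≡ 1 (mod m)` and `gcd(β+1,m) = 1`, the exchange
function of `t_{m,−m}(z)` with `L(w)` is trivial:
`∏_{k=1}^{m} U(q^{−N(λ+1)k/m} x) / U(q^{−Nλk/m} x) = 1`,
at every nonzero `x` where all theta factors occurring are nonzero. -/
theorem localized_center (N : ℕ) (hN : 2 ≤ N) (q : ℝ) (hq0 : 0 < q) (hq1 : q < 1)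
    (m : ℤ) (hm : 3 ≤ m) (hmodd : Odd m)
    (l : ℤ) (hcop : IsCoprime l m) (hlm : ¬ l ≡ m - 1 [ZMOD m])
    (b : ℤ) (hb : b * l ≡ 1 [ZMOD m]) (hb1 : IsCoprime (b + 1) m)
    (x : ℂ) (hx : x ≠ 0)
    (hreg1 : ∀ k ∈ Finset.Icc (1 : ℤ) m,
      thetaReg N q (((q ^ (-(N : ℝ) * ((l : ℝ) + 1) * (k : ℝ) / (m : ℝ)) : ℝ) : ℂ) * x))
    (hreg2 : ∀ k ∈ Finset.Icc (1 : ℤ) m,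
      thetaReg N q (((q ^ (-(N : ℝ) * (l : ℝ) * (k : ℝ) / (m : ℝ)) : ℝ) : ℂ) * x)) :
    ∏ k ∈ Finset.Icc (1 : ℤ) m,
      Ufun N q (((q ^ (-(N : ℝ) * ((l : ℝ) + 1) * (k : ℝ) / (m : ℝ)) : ℝ) : ℂ) * x) /
        Ufun N q (((q ^ (-(N : ℝ) * (l : ℝ) * (k : ℝ) / (m : ℝ)) : ℝ) : ℂ) * x) = 1 := by
  have hN1 : 1 ≤ N := by omega
  have hm' : (0 : ℤ) < m := by omega
  -- coprimality of l + 1 and m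
  obtain ⟨c, hc⟩ := (Int.ModEq.dvd hb : m ∣ 1 - b * l)
  have hlb : IsCoprime (l * (b + 1)) m := hcop.mul_left hb1
  have hcop1 : IsCoprime (l + 1) m := by
    have h := hlb.add_mul_left_left c
    rwa [show l * (b + 1) + m * c = l + 1 by linear_combination -hc] at h
  -- the canonical function of residues
  set F : ℤ → ℂ := fun r => Ufun N q (((q ^ (-(N : ℝ) * (r : ℝ) / (m : ℝ)) : ℝ) : ℂ) * x)
    with hF
  -- per-term reductions
  have key1 : ∀ k ∈ Finset.Icc (1 : ℤ) m,
      Ufun N q (((q ^ (-(N : ℝ) * ((l : ℝ) + 1) * (k : ℝ) / (m : ℝ)) : ℝ) : ℂ) * x)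
        = F ((l + 1) * k % m) := by
    intro k _
    rw [show -(N : ℝ) * ((l : ℝ) + 1) * (k : ℝ) / (m : ℝ)
          = -(N : ℝ) * ((((l + 1) * k : ℤ) : ℝ)) / (m : ℝ) by push_cast; ring]
    exact Ufun_exp_mod N hN1 hq0 hq1 hm' hx ((l + 1) * k)
  have key2 : ∀ k ∈ Finset.Icc (1 : ℤ) m,
      Ufun N q (((q ^ (-(N : ℝ) * (l : ℝ) * (k : ℝ) / (m : ℝ)) : ℝ) : ℂ) * x)
        = F (l * k % m) := by
    intro k _
    rw [show -(N : ℝ) * (l : ℝ) * (k : ℝ) / (m : ℝ)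
          = -(N : ℝ) * (((l * k : ℤ) : ℝ)) / (m : ℝ) by push_cast; ring]
    exact Ufun_exp_mod N hN1 hq0 hq1 hm' hx (l * k)
  -- products coincide
  have P1 : (∏ k ∈ Finset.Icc (1 : ℤ) m,
      Ufun N q (((q ^ (-(N : ℝ) * ((l : ℝ) + 1) * (k : ℝ) / (m : ℝ)) : ℝ) : ℂ) * x))
        = ∏ r ∈ Finset.Ico (0 : ℤ) m, F r := by
    rw [Finset.prod_congr rfl key1]
    exact prod_residues hm' hcop1 F
  have P2 : (∏ k ∈ Finset.Icc (1 : ℤ) m,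
      Ufun N q (((q ^ (-(N : ℝ) * (l : ℝ) * (k : ℝ) / (m : ℝ)) : ℝ) : ℂ) * x))
        = ∏ r ∈ Finset.Ico (0 : ℤ) m, F r := by
    rw [Finset.prod_congr rfl key2]
    exact prod_residues hm' hcop F
  -- nonvanishing of the numerator product
  have hC : ((q ^ ((2 : ℝ) / N - 2) : ℝ) : ℂ) ≠ 0 :=
    Complex.ofReal_ne_zero.2 (Real.rpow_pos_of_pos hq0 _).ne'
  have hne : ∀ k ∈ Finset.Icc (1 : ℤ) m,
      Ufun N q (((q ^ (-(N : ℝ) * ((l : ℝ) + 1) * (k : ℝ) / (m : ℝ)) : ℝ) : ℂ) * x) ≠ 0 := by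
    intro k hk
    obtain ⟨h1, h2, h3, h4⟩ := hreg1 k hk
    exact div_ne_zero (mul_ne_zero hC (mul_ne_zero h1 h2)) (mul_ne_zero h3 h4)
  have hfne : (∏ k ∈ Finset.Icc (1 : ℤ) m,
      Ufun N q (((q ^ (-(N : ℝ) * ((l : ℝ) + 1) * (k : ℝ) / (m : ℝ)) : ℝ) : ℂ) * x)) ≠ 0 :=
    Finset.prod_ne_zero_iff.2 hne
  rw [Finset.prod_div_distrib, P1, P2, div_self (P1 ▸ hfne)]
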